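/- Let D > 0 and 0 < γ < D+1 be real numbers, and let C_H, c_H, λ₁ > 0. There exist constants C > 0 and c > 0, depending only on D, γ, C_H, c_H and λ₁, with the following property. Let ρ ∈ (0,1] and let h : (0,∞) → ℝ be a measurable function satisfying 0 ≤ h(t) for all t > 0, h(t) ≤ C_H · t^(−D/(D+1)) · exp(−c_H · (ρ^(D+1)/t)^(γ/(D+1−γ))) for all 0 < t < 1, and h(t) ≤ C_H · exp(−λ₁·t) for all t ≥ 1. Then for every λ ≥ 0, ∫_0^∞ e^(−λt) · h(t) dt ≤ C · (1+λ)^(−1/(D+1)) · exp(−c · ρ^γ · λ^(γ/(D+1))). -/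

import Mathlib

open MeasureTheory Real

private lemma rkb_intOn_pow (D : ℝ) (hD : 0 < D) :
    IntegrableOn (fun t : ℝ => t ^ (-(D / (D + 1)))) (Set.Ioo 0 1) := by
  have hD1 : (0:ℝ) < D + 1 := by linarith
  have hr : (-1:ℝ) < -(D / (D + 1)) := by
    have : D / (D + 1) < 1 := by rw [div_lt_one hD1]; linarith
    linarith
  have := intervalIntegral.intervalIntegrable_rpow' (a := 0) (b := 1) hr
  rw [intervalIntegrable_iff_integrableOn_Ioc_of_le (by norm_num)] at this
  exact this.mono_set Set.Ioo_subset_Ioc_self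

private lemma rkb_intOn_aux (D lam : ℝ) (hD : 0 < D) (hlam : 0 ≤ lam) :
    IntegrableOn (fun t : ℝ => t ^ (-(D / (D + 1))) * Real.exp (-(lam / 2) * t))
      (Set.Ioo 0 1) := by
  apply Integrable.mono' (rkb_intOn_pow D hD)
  · refine ContinuousOn.aestronglyMeasurable ?_ measurableSet_Ioo
    apply ContinuousOn.mul
    · intro x hx
      exact (Real.continuousAt_rpow_const x _ (Or.inl hx.1.ne')).continuousWithinAt
    · exact (Real.continuous_exp.comp (continuous_const.mul continuous_id)).continuousOn
  · refine (ae_restrict_iff' measurableSet_Ioo).2 (ae_of_all _ fun t ht => ?_)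
    have h1 : (0:ℝ) ≤ t ^ (-(D / (D + 1))) := Real.rpow_nonneg ht.1.le _
    rw [Real.norm_eq_abs, abs_of_nonneg (mul_nonneg h1 (Real.exp_nonneg _))]
    have he : Real.exp (-(lam / 2) * t) ≤ 1 := by
      rw [Real.exp_le_one_iff]
      nlinarith [mul_nonneg (show (0:ℝ) ≤ lam / 2 by linarith) ht.1.le]
    calc t ^ (-(D / (D + 1))) * Real.exp (-(lam / 2) * t)
        ≤ t ^ (-(D / (D + 1))) * 1 := mul_le_mul_of_nonneg_left he h1
      _ = t ^ (-(D / (D + 1))) := mul_one _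

/-- value of the power integral -/
private lemma rkb_pow_integral (D : ℝ) (hD : 0 < D) {ε : ℝ} (hε0 : 0 < ε) :
    ∫ t in Set.Ioo (0:ℝ) ε, t ^ (-(D / (D + 1))) = (D + 1) * ε ^ (1 / (D + 1)) := by
  have hD1 : (0:ℝ) < D + 1 := by linarith
  have hr : (-1:ℝ) < -(D / (D + 1)) := by
    have : D / (D + 1) < 1 := by rw [div_lt_one hD1]; linarith
    linarith
  have hr1 : -(D / (D + 1)) + 1 = 1 / (D + 1) := by field_simp; ring
  rw [← integral_Ioc_eq_integral_Ioo, ← intervalIntegral.integral_of_le hε0.le,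
    integral_rpow (Or.inl hr), hr1, Real.zero_rpow (by positivity), sub_zero,
    div_eq_mul_inv, one_div, inv_inv, mul_comm]

/-- Claim A : the subordinated power integral bound. -/
private lemma rkb_claimA (D lam : ℝ) (hD : 0 < D) (hlam : 0 ≤ lam) :
    ∫ t in Set.Ioo (0:ℝ) 1, t ^ (-(D / (D + 1))) * Real.exp (-(lam / 2) * t) ≤
      (2 * (D + 1) + 4) * (1 + lam) ^ (-(1 / (D + 1))) := by
  have hD1 : (0:ℝ) < D + 1 := by linarith
  have hb0 : 0 < 1 / (D + 1) := by positivity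
  have hb1 : 1 / (D + 1) ≤ 1 := by rw [div_le_one hD1]; linarith
  have hX0 : (0:ℝ) ≤ (1 + lam) ^ (-(1 / (D + 1))) := Real.rpow_nonneg (by linarith) _
  have hptexp : ∀ t : ℝ, 0 < t → Real.exp (-(lam / 2) * t) ≤ 1 := by
    intro t ht
    rw [Real.exp_le_one_iff]
    nlinarith [mul_nonneg (show (0:ℝ) ≤ lam / 2 by linarith) ht.le]
  rcases le_or_gt lam 1 with hl | hl
  · -- small lam
    have h1 : ∫ t in Set.Ioo (0:ℝ) 1, t ^ (-(D / (D + 1))) * Real.exp (-(lam / 2) * t) ≤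
        ∫ t in Set.Ioo (0:ℝ) 1, t ^ (-(D / (D + 1))) := by
      refine setIntegral_mono_on (rkb_intOn_aux D lam hD hlam) (rkb_intOn_pow D hD)
        measurableSet_Ioo fun t ht => ?_
      calc t ^ (-(D / (D + 1))) * Real.exp (-(lam / 2) * t)
          ≤ t ^ (-(D / (D + 1))) * 1 :=
            mul_le_mul_of_nonneg_left (hptexp t ht.1) (Real.rpow_nonneg ht.1.le _)
        _ = t ^ (-(D / (D + 1))) := mul_one _
    rw [rkb_pow_integral D hD one_pos, Real.one_rpow, mul_one] at h1
    have h2 : (1/2 : ℝ) ≤ (1 + lam) ^ (-(1 / (D + 1))) := by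
      have ha : ((2:ℝ)) ^ (-(1:ℝ)) ≤ (2:ℝ) ^ (-(1 / (D + 1))) :=
        Real.rpow_le_rpow_of_exponent_le one_le_two (by linarith)
      have hb : (2:ℝ) ^ (-(1 / (D + 1))) ≤ (1 + lam) ^ (-(1 / (D + 1))) :=
        Real.rpow_le_rpow_of_nonpos (by linarith) (by linarith) (by linarith)
      rw [Real.rpow_neg_one] at ha
      have h2i : (1/2 : ℝ) = 2⁻¹ := by norm_num
      linarith
    nlinarith
  · -- large lam
    have hlam0 : 0 < lam := lt_trans one_pos hl
    set ε : ℝ := (1 + lam)⁻¹ with hεdef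
    have h1lam : (1:ℝ) < 1 + lam := by linarith
    have hε0 : 0 < ε := by positivity
    have hε1 : ε < 1 := by rw [hεdef]; exact inv_lt_one_of_one_lt₀ h1lam
    have hεb : ε ^ (1 / (D + 1)) = (1 + lam) ^ (-(1 / (D + 1))) := by
      rw [Real.rpow_neg (by linarith), ← Real.inv_rpow (by linarith)]
    have hεb' : ε ^ (-(D / (D + 1))) = (1 + lam) ^ (D / (D + 1)) := by
      rw [hεdef, Real.inv_rpow (by linarith), ← Real.rpow_neg (by linarith), neg_neg]
    have hsplit : Set.Ioo (0:ℝ) ε ∪ Set.Ico ε 1 = Set.Ioo 0 1 :=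
      Set.Ioo_union_Ico_eq_Ioo hε0 hε1.le
    have hdisj : Disjoint (Set.Ioo (0:ℝ) ε) (Set.Ico ε 1) := by
      rw [Set.disjoint_left]
      rintro x ⟨_, hx1⟩ ⟨hx2, _⟩
      exact absurd hx2 (not_le.2 hx1)
    have hsub1 : Set.Ioo (0:ℝ) ε ⊆ Set.Ioo 0 1 := Set.Ioo_subset_Ioo_right hε1.le
    have hsub2 : Set.Ico ε 1 ⊆ Set.Ioo (0:ℝ) 1 := fun x hx => ⟨lt_of_lt_of_le hε0 hx.1, hx.2⟩
    have hIA := rkb_intOn_aux D lam hD hlam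
    rw [← hsplit, setIntegral_union hdisj measurableSet_Ico (hIA.mono_set hsub1)
      (hIA.mono_set hsub2)]
    -- piece 1
    have hp1 : ∫ t in Set.Ioo (0:ℝ) ε, t ^ (-(D / (D + 1))) * Real.exp (-(lam / 2) * t) ≤
        (D + 1) * (1 + lam) ^ (-(1 / (D + 1))) := by
      have := setIntegral_mono_on (hIA.mono_set hsub1) ((rkb_intOn_pow D hD).mono_set hsub1)
        measurableSet_Ioo (fun t ht => by
          calc t ^ (-(D / (D + 1))) * Real.exp (-(lam / 2) * t)
              ≤ t ^ (-(D / (D + 1))) * 1 :=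
                mul_le_mul_of_nonneg_left (hptexp t ht.1) (Real.rpow_nonneg ht.1.le _)
            _ = t ^ (-(D / (D + 1))) := mul_one _)
      rw [rkb_pow_integral D hD hε0, hεb] at this
      exact this
    -- piece 2
    have hExpInt : IntegrableOn (fun t : ℝ => Real.exp (-(lam / 2) * t)) (Set.Ici ε) := by
      exact (integrableOn_Ici_iff_integrableOn_Ioi (by simp)).2 (exp_neg_integrableOn_Ioi ε (by linarith))
    have hp2 : ∫ t in Set.Ico ε 1, t ^ (-(D / (D + 1))) * Real.exp (-(lam / 2) * t) ≤
        4 * (1 + lam) ^ (-(1 / (D + 1))) := by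
      have hstep1 : ∫ t in Set.Ico ε 1, t ^ (-(D / (D + 1))) * Real.exp (-(lam / 2) * t) ≤
          ∫ t in Set.Ico ε 1, ε ^ (-(D / (D + 1))) * Real.exp (-(lam / 2) * t) := by
        refine setIntegral_mono_on (hIA.mono_set hsub2)
          ((hExpInt.mono_set Set.Ico_subset_Ici_self).const_mul _) measurableSet_Ico
          fun t ht => mul_le_mul_of_nonneg_right
            (Real.rpow_le_rpow_of_nonpos hε0 ht.1 (neg_nonpos.2 (by positivity)))
            (Real.exp_nonneg _)
      have hstep2 : ∫ t in Set.Ico ε 1, ε ^ (-(D / (D + 1))) * Real.exp (-(lam / 2) * t) =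
          ε ^ (-(D / (D + 1))) * ∫ t in Set.Ico ε 1, Real.exp (-(lam / 2) * t) :=
        integral_const_mul _ _
      have hstep3 : ∫ t in Set.Ico ε 1, Real.exp (-(lam / 2) * t) ≤
          ∫ t in Set.Ici ε, Real.exp (-(lam / 2) * t) := by
        refine setIntegral_mono_set hExpInt (ae_of_all _ fun t => Real.exp_nonneg _) ?_
        exact HasSubset.Subset.eventuallyLE Set.Ico_subset_Ici_self
      have hstep4 : ∫ t in Set.Ici ε, Real.exp (-(lam / 2) * t) ≤ 2 / lam := by
        rw [integral_Ici_eq_integral_Ioi]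
        have hb2 : (0:ℝ) < lam / 2 := by linarith
        have hcomp : ∫ t in Set.Ioi ε, Real.exp (-(lam / 2) * t) =
            (lam / 2)⁻¹ * Real.exp (-(lam / 2 * ε)) := by
          have h := integral_comp_mul_left_Ioi (fun x => Real.exp (-x)) ε hb2
          simp only [smul_eq_mul] at h
          rw [show (fun t : ℝ => Real.exp (-(lam / 2) * t)) = fun t : ℝ =>
            Real.exp (-(lam / 2 * t)) by funext t; rw [neg_mul]]
          rw [h, integral_exp_neg_Ioi]
        rw [hcomp]
        have : Real.exp (-(lam / 2 * ε)) ≤ 1 := by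
          rw [Real.exp_le_one_iff]
          have : 0 ≤ lam / 2 * ε := mul_nonneg hb2.le hε0.le
          linarith
        calc (lam / 2)⁻¹ * Real.exp (-(lam / 2 * ε)) ≤ (lam / 2)⁻¹ * 1 :=
              mul_le_mul_of_nonneg_left this (by positivity)
          _ = 2 / lam := by rw [mul_one]; field_simp
      have hfinal : ε ^ (-(D / (D + 1))) * (2 / lam) ≤ 4 * (1 + lam) ^ (-(1 / (D + 1))) := by
        rw [hεb']
        have hsum : D / (D + 1) = -(1 / (D + 1)) + 1 := by field_simp; ring
        rw [hsum, Real.rpow_add_one (by positivity)]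
        have h24 : (1 + lam) * (2 / lam) ≤ 4 := by
          rw [← mul_div_assoc, div_le_iff₀ hlam0]
          linarith
        calc (1 + lam) ^ (-(1 / (D + 1))) * (1 + lam) * (2 / lam)
            = (1 + lam) ^ (-(1 / (D + 1))) * ((1 + lam) * (2 / lam)) := by ring
          _ ≤ (1 + lam) ^ (-(1 / (D + 1))) * 4 := mul_le_mul_of_nonneg_left h24 hX0
          _ = 4 * (1 + lam) ^ (-(1 / (D + 1))) := by ring
      have hεp : (0:ℝ) ≤ ε ^ (-(D / (D + 1))) := Real.rpow_nonneg hε0.le _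
      calc ∫ t in Set.Ico ε 1, t ^ (-(D / (D + 1))) * Real.exp (-(lam / 2) * t)
          ≤ ε ^ (-(D / (D + 1))) * ∫ t in Set.Ico ε 1, Real.exp (-(lam / 2) * t) := by
            rw [← hstep2]; exact hstep1
        _ ≤ ε ^ (-(D / (D + 1))) * (2 / lam) := by
            refine mul_le_mul_of_nonneg_left ?_ hεp
            exact le_trans hstep3 hstep4
        _ ≤ 4 * (1 + lam) ^ (-(1 / (D + 1))) := hfinal
    nlinarith [mul_nonneg (le_of_lt hD1) hX0]

/-- weighted AM-GM convenience -/
private lemma rkb_amgm {θ u v : ℝ} (hθ0 : 0 ≤ θ) (hθ1 : θ ≤ 1) (hu : 0 ≤ u) (hv : 0 ≤ v) :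
    u ^ θ * v ^ (1 - θ) ≤ u + v := by
  have := Real.geom_mean_le_arith_mean2_weighted (w₂ := 1 - θ) hθ0 (by linarith) hu hv
    (by ring)
  nlinarith

/-- the key algebraic identity -/
private lemma rkb_key_eq (D γ c_H ρ t lam : ℝ) (hD : 0 < D) (hγ0 : 0 < γ) (hγ : γ < D + 1)
    (hcH : 0 < c_H) (hρ : 0 < ρ) (ht : 0 < t) (hlam : 0 < lam) :
    (lam / 2 * t) ^ (γ / (D + 1)) *
        (c_H * (ρ ^ (D + 1) / t) ^ (γ / (D + 1 - γ))) ^ (1 - γ / (D + 1)) =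
      (2:ℝ) ^ (-(γ / (D + 1))) * c_H ^ (1 - γ / (D + 1)) * ρ ^ γ * lam ^ (γ / (D + 1)) := by
  have hD1 : (0:ℝ) < D + 1 := by linarith
  have hDγ : (0:ℝ) < D + 1 - γ := by linarith
  have hA : (0:ℝ) < ρ ^ (D + 1) := Real.rpow_pos_of_pos hρ _
  have hAt : (0:ℝ) < ρ ^ (D + 1) / t := by positivity
  have hX : (0:ℝ) < (ρ ^ (D + 1) / t) ^ (γ / (D + 1 - γ)) := Real.rpow_pos_of_pos hAt _
  have hβθ : γ / (D + 1 - γ) * (1 - γ / (D + 1)) = γ / (D + 1) := by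
    field_simp
  have h1 : (c_H * (ρ ^ (D + 1) / t) ^ (γ / (D + 1 - γ))) ^ (1 - γ / (D + 1)) =
      c_H ^ (1 - γ / (D + 1)) * (ρ ^ (D + 1) / t) ^ (γ / (D + 1)) := by
    rw [Real.mul_rpow hcH.le hX.le, ← Real.rpow_mul hAt.le, hβθ]
  rw [h1]
  have h2 : (ρ ^ (D + 1) / t) ^ (γ / (D + 1)) =
      ρ ^ γ / t ^ (γ / (D + 1)) := by
    rw [Real.div_rpow hA.le ht.le, ← Real.rpow_mul hρ.le]
    congr 1
    field_simp
  rw [h2]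
  have h3 : (lam / 2 * t) ^ (γ / (D + 1)) =
      lam ^ (γ / (D + 1)) * (2:ℝ) ^ (-(γ / (D + 1))) * t ^ (γ / (D + 1)) := by
    rw [Real.mul_rpow (by positivity) ht.le, Real.div_rpow hlam.le (by norm_num),
      Real.rpow_neg (by norm_num), div_eq_mul_inv]
  rw [h3]
  have htp : (0:ℝ) < t ^ (γ / (D + 1)) := Real.rpow_pos_of_pos ht _
  field_simp

/-- key exponent inequality -/
private lemma rkb_key (D γ c_H ρ t lam : ℝ) (hD : 0 < D) (hγ0 : 0 < γ) (hγ : γ < D + 1)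
    (hcH : 0 < c_H) (hρ : 0 < ρ) (ht : 0 < t) (hlam : 0 ≤ lam) :
    (2:ℝ) ^ (-(γ / (D + 1))) * c_H ^ (1 - γ / (D + 1)) * ρ ^ γ * lam ^ (γ / (D + 1)) ≤
      lam / 2 * t + c_H * (ρ ^ (D + 1) / t) ^ (γ / (D + 1 - γ)) := by
  have hD1 : (0:ℝ) < D + 1 := by linarith
  have hX : (0:ℝ) ≤ (ρ ^ (D + 1) / t) ^ (γ / (D + 1 - γ)) := Real.rpow_nonneg (by positivity) _
  rcases eq_or_lt_of_le hlam with h0 | h0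
  · rw [← h0, Real.zero_rpow (by positivity), mul_zero]
    positivity
  · rw [← rkb_key_eq D γ c_H ρ t lam hD hγ0 hγ hcH hρ ht h0]
    exact rkb_amgm (by positivity) (by rw [div_le_one hD1]; linarith)
      (by positivity) (by positivity)

set_option maxHeartbeats 1000000 in
/-- Proposition 2.1: resolvent-kernel bound from sub-Gaussian heat kernel upper bounds. -/
theorem resolvent_kernel_bound (D γ C_H c_H lam₁ : ℝ) (hD : 0 < D) (hγ0 : 0 < γ)
    (hγ : γ < D + 1) (hCH : 0 < C_H) (hcH : 0 < c_H) (hlam₁ : 0 < lam₁) :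
    ∃ C : ℝ, 0 < C ∧ ∃ c : ℝ, 0 < c ∧
      ∀ ρ : ℝ, 0 < ρ → ρ ≤ 1 →
      ∀ h : ℝ → ℝ, Measurable h →
        (∀ t : ℝ, 0 < t → 0 ≤ h t) →
        (∀ t : ℝ, 0 < t → t < 1 →
          h t ≤ C_H * t ^ (-(D / (D + 1))) *
            Real.exp (-c_H * (ρ ^ (D + 1) / t) ^ (γ / (D + 1 - γ)))) →
        (∀ t : ℝ, 1 ≤ t → h t ≤ C_H * Real.exp (-lam₁ * t)) →
        ∀ lam : ℝ, 0 ≤ lam →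
          ∫ t in Set.Ioi (0 : ℝ), Real.exp (-lam * t) * h t ≤
            C * (1 + lam) ^ (-(1 / (D + 1))) *
              Real.exp (-c * ρ ^ γ * lam ^ (γ / (D + 1))) := by
  have hD1 : (0:ℝ) < D + 1 := by linarith
  set θ : ℝ := γ / (D + 1) with hθdef
  have hθ0 : 0 < θ := by positivity
  have hθ1 : θ < 1 := by rw [hθdef, div_lt_one hD1]; linarith
  set c₀ : ℝ := (2:ℝ) ^ (-θ) * c_H ^ (1 - θ) with hc₀def
  have hc₀ : 0 < c₀ := mul_pos (Real.rpow_pos_of_pos two_pos _) (Real.rpow_pos_of_pos hcH _)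
  set c : ℝ := min c₀ (D / (D + 1)) with hcdef
  have hc : 0 < c := lt_min hc₀ (by positivity)
  have hcD : c ≤ D / (D + 1) := min_le_right _ _
  set M : ℝ := ∫ t in Set.Ici (1:ℝ), Real.exp (-lam₁ * t) with hMdef
  have hM0 : 0 ≤ M := setIntegral_nonneg measurableSet_Ici fun t _ => Real.exp_nonneg _
  refine ⟨C_H * (2 * (D + 1) + 4) + C_H * Real.exp 1 * M, by positivity, c, hc, ?_⟩
  intro ρ hρ0 hρ1 h hmeas h0 h2 h3 lam hlam
  set E : ℝ := Real.exp (-c * ρ ^ γ * lam ^ θ) with hEdef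
  have hE0 : 0 < E := Real.exp_pos _
  have hE1 : E ≤ 1 := by
    rw [hEdef, Real.exp_le_one_iff]
    have : 0 ≤ c * ρ ^ γ * lam ^ θ :=
      mul_nonneg (mul_nonneg hc.le (Real.rpow_nonneg hρ0.le _)) (Real.rpow_nonneg hlam _)
    nlinarith
  set X : ℝ := (1 + lam) ^ (-(1 / (D + 1))) with hXdef
  have hX0 : 0 < X := Real.rpow_pos_of_pos (by linarith) _
  set f : ℝ → ℝ := fun t => Real.exp (-lam * t) * h t with hfdef
  have hexple : ∀ t : ℝ, 0 ≤ t → Real.exp (-lam * t) ≤ 1 := by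
    intro t ht
    rw [Real.exp_le_one_iff]
    nlinarith [mul_nonneg hlam ht]
  -- integrability on Ioo 0 1
  have hIoo : IntegrableOn f (Set.Ioo 0 1) := by
    apply Integrable.mono' ((rkb_intOn_pow D hD).const_mul C_H)
    · exact ((measurable_id.const_mul (-lam)).exp.mul hmeas).aestronglyMeasurable
    · refine (ae_restrict_iff' measurableSet_Ioo).2 (ae_of_all _ fun t ht => ?_)
      have hf0 : 0 ≤ f t := mul_nonneg (Real.exp_nonneg _) (h0 t ht.1)
      rw [Real.norm_eq_abs, abs_of_nonneg hf0]
      have he2 : Real.exp (-c_H * (ρ ^ (D + 1) / t) ^ (γ / (D + 1 - γ))) ≤ 1 := by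
        rw [Real.exp_le_one_iff]
        have hXp : (0:ℝ) ≤ (ρ ^ (D + 1) / t) ^ (γ / (D + 1 - γ)) :=
          Real.rpow_nonneg (div_nonneg (Real.rpow_nonneg hρ0.le _) ht.1.le) _
        nlinarith
      calc f t ≤ h t := mul_le_of_le_one_left (h0 t ht.1) (hexple t ht.1.le)
        _ ≤ C_H * t ^ (-(D / (D + 1))) *
            Real.exp (-c_H * (ρ ^ (D + 1) / t) ^ (γ / (D + 1 - γ))) := h2 t ht.1 ht.2
        _ ≤ C_H * t ^ (-(D / (D + 1))) * 1 := by
            refine mul_le_mul_of_nonneg_left he2 ?_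
            have := Real.rpow_nonneg ht.1.le (-(D / (D + 1)))
            positivity
        _ = C_H * t ^ (-(D / (D + 1))) := mul_one _
  -- integrability on Ici 1
  have hexpIci : IntegrableOn (fun t : ℝ => Real.exp (-lam₁ * t)) (Set.Ici 1) :=
    (integrableOn_Ici_iff_integrableOn_Ioi (by simp)).2 (exp_neg_integrableOn_Ioi 1 hlam₁)
  have hIci : IntegrableOn f (Set.Ici 1) := by
    apply Integrable.mono' (hexpIci.const_mul C_H)
    · exact ((measurable_id.const_mul (-lam)).exp.mul hmeas).aestronglyMeasurable
    · refine (ae_restrict_iff' measurableSet_Ici).2 (ae_of_all _ fun t ht => ?_)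
      have ht0 : (0:ℝ) < t := lt_of_lt_of_le one_pos ht
      have hf0 : 0 ≤ f t := mul_nonneg (Real.exp_nonneg _) (h0 t ht0)
      rw [Real.norm_eq_abs, abs_of_nonneg hf0]
      calc f t ≤ h t := mul_le_of_le_one_left (h0 t ht0) (hexple t ht0.le)
        _ ≤ C_H * Real.exp (-lam₁ * t) := h3 t ht
  -- split
  have hsplit : Set.Ioo (0:ℝ) 1 ∪ Set.Ici 1 = Set.Ioi 0 := Set.Ioo_union_Ici_eq_Ioi one_pos
  have hdisj : Disjoint (Set.Ioo (0:ℝ) 1) (Set.Ici 1) := by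
    rw [Set.disjoint_left]
    rintro x ⟨_, hx1⟩ hx2
    exact absurd hx2 (not_le.2 hx1)
  have hIsplit : ∫ t in Set.Ioi (0:ℝ), f t =
      (∫ t in Set.Ioo (0:ℝ) 1, f t) + ∫ t in Set.Ici (1:ℝ), f t := by
    rw [← hsplit, setIntegral_union hdisj measurableSet_Ici hIoo hIci]
  -- piece 1 bound
  have hpt1 : ∀ t ∈ Set.Ioo (0:ℝ) 1, f t ≤
      (C_H * E) * (t ^ (-(D / (D + 1))) * Real.exp (-(lam / 2) * t)) := by
    intro t ht
    have htr : (0:ℝ) ≤ t ^ (-(D / (D + 1))) := Real.rpow_nonneg ht.1.le _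
    have hkey := rkb_key D γ c_H ρ t lam hD hγ0 hγ hcH hρ0 ht.1 hlam
    have hkey' : c * ρ ^ γ * lam ^ θ ≤
        lam / 2 * t + c_H * (ρ ^ (D + 1) / t) ^ (γ / (D + 1 - γ)) := by
      have hm : c ≤ c₀ := min_le_left _ _
      have hgeom : (0:ℝ) ≤ ρ ^ γ * lam ^ θ := by positivity
      nlinarith [mul_le_mul_of_nonneg_right hm hgeom]
    have hlt2 : 0 ≤ lam / 2 * t := mul_nonneg (by linarith) ht.1.le
    calc f t ≤ Real.exp (-lam * t) * (C_H * t ^ (-(D / (D + 1))) *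
          Real.exp (-c_H * (ρ ^ (D + 1) / t) ^ (γ / (D + 1 - γ)))) :=
          mul_le_mul_of_nonneg_left (h2 t ht.1 ht.2) (Real.exp_nonneg _)
      _ = (C_H * t ^ (-(D / (D + 1)))) *
          Real.exp (-lam * t + -c_H * (ρ ^ (D + 1) / t) ^ (γ / (D + 1 - γ))) := by
          rw [Real.exp_add]; ring
      _ ≤ (C_H * t ^ (-(D / (D + 1)))) *
          Real.exp (-(lam / 2) * t + -c * ρ ^ γ * lam ^ θ) := by
          refine mul_le_mul_of_nonneg_left (Real.exp_le_exp.2 ?_) (by positivity)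
          nlinarith
      _ = (C_H * E) * (t ^ (-(D / (D + 1))) * Real.exp (-(lam / 2) * t)) := by
          rw [Real.exp_add, hEdef]; ring
  have hI1 : ∫ t in Set.Ioo (0:ℝ) 1, f t ≤
      (C_H * E) * ((2 * (D + 1) + 4) * X) := by
    have hg1 : IntegrableOn (fun t : ℝ => (C_H * E) *
        (t ^ (-(D / (D + 1))) * Real.exp (-(lam / 2) * t))) (Set.Ioo 0 1) :=
      (rkb_intOn_aux D lam hD hlam).const_mul _
    calc ∫ t in Set.Ioo (0:ℝ) 1, f t
        ≤ ∫ t in Set.Ioo (0:ℝ) 1, (C_H * E) *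
            (t ^ (-(D / (D + 1))) * Real.exp (-(lam / 2) * t)) :=
          setIntegral_mono_on hIoo hg1 measurableSet_Ioo hpt1
      _ = (C_H * E) * ∫ t in Set.Ioo (0:ℝ) 1,
            t ^ (-(D / (D + 1))) * Real.exp (-(lam / 2) * t) := integral_const_mul _ _
      _ ≤ (C_H * E) * ((2 * (D + 1) + 4) * X) := by
          refine mul_le_mul_of_nonneg_left ?_ (by positivity)
          exact rkb_claimA D lam hD hlam
  -- piece 2 bound
  have hI2 : ∫ t in Set.Ici (1:ℝ), f t ≤ (C_H * Real.exp (-lam)) * M := by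
    have hg2 : IntegrableOn (fun t : ℝ => (C_H * Real.exp (-lam)) * Real.exp (-lam₁ * t))
        (Set.Ici 1) := hexpIci.const_mul _
    calc ∫ t in Set.Ici (1:ℝ), f t
        ≤ ∫ t in Set.Ici (1:ℝ), (C_H * Real.exp (-lam)) * Real.exp (-lam₁ * t) := by
          refine setIntegral_mono_on hIci hg2 measurableSet_Ici fun t ht => ?_
          have ht0 : (0:ℝ) < t := lt_of_lt_of_le one_pos ht
          have he : Real.exp (-lam * t) ≤ Real.exp (-lam) := by
            apply Real.exp_le_exp.2
            have : lam * 1 ≤ lam * t := mul_le_mul_of_nonneg_left ht hlam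
            nlinarith
          calc f t ≤ Real.exp (-lam * t) * (C_H * Real.exp (-lam₁ * t)) :=
                mul_le_mul_of_nonneg_left (h3 t ht) (Real.exp_nonneg _)
            _ ≤ Real.exp (-lam) * (C_H * Real.exp (-lam₁ * t)) := by
                refine mul_le_mul_of_nonneg_right he ?_
                positivity
            _ = (C_H * Real.exp (-lam)) * Real.exp (-lam₁ * t) := by ring
      _ = (C_H * Real.exp (-lam)) * M := integral_const_mul _ _
  -- claim B
  have hB : Real.exp (-lam) ≤ Real.exp 1 * (X * E) := by
    have hlog : Real.log (1 + lam) ≤ lam := by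
      have := Real.log_le_sub_one_of_pos (show (0:ℝ) < 1 + lam by linarith)
      linarith
    have hXexp : X = Real.exp (Real.log (1 + lam) * (-(1 / (D + 1)))) := by
      rw [hXdef, Real.rpow_def_of_pos (by linarith)]
    rw [hXexp, hEdef, ← Real.exp_add, ← Real.exp_add]
    apply Real.exp_le_exp.2
    have hρle : ρ ^ γ ≤ 1 := Real.rpow_le_one hρ0.le hρ1 hγ0.le
    have hlamθ : lam ^ θ ≤ 1 + lam := by
      rcases le_or_gt lam 1 with hll | hll
      · have : lam ^ θ ≤ 1 := Real.rpow_le_one hlam hll hθ0.le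
        linarith
      · have h1 : lam ^ θ ≤ lam ^ (1:ℝ) :=
          Real.rpow_le_rpow_of_exponent_le hll.le hθ1.le
        rw [Real.rpow_one] at h1
        linarith
    have hcB : c * ρ ^ γ * lam ^ θ ≤ c * (1 + lam) := by
      have h1 : ρ ^ γ * lam ^ θ ≤ 1 * (1 + lam) := by
        apply mul_le_mul hρle hlamθ (by positivity) zero_le_one
      nlinarith
    have hlogmul : lam * (-(1 / (D + 1))) ≤ Real.log (1 + lam) * (-(1 / (D + 1))) := by
      apply mul_le_mul_of_nonpos_right hlog
      have : (0:ℝ) < 1 / (D + 1) := by positivity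
      linarith
    have hcl : lam * c + lam * (1 / (D + 1)) ≤ lam := by
      have hc1 : c + 1 / (D + 1) ≤ 1 := by
        have : D / (D + 1) + 1 / (D + 1) = 1 := by field_simp
        linarith
      nlinarith
    have hc1' : c ≤ 1 := by
      have : D / (D + 1) < 1 := by rw [div_lt_one hD1]; linarith
      linarith
    nlinarith
  -- combine
  rw [hIsplit]
  calc (∫ t in Set.Ioo (0:ℝ) 1, f t) + ∫ t in Set.Ici (1:ℝ), f t
      ≤ (C_H * E) * ((2 * (D + 1) + 4) * X) + (C_H * Real.exp (-lam)) * M :=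
        add_le_add hI1 hI2
    _ ≤ (C_H * E) * ((2 * (D + 1) + 4) * X) + (C_H * (Real.exp 1 * (X * E))) * M := by
        refine add_le_add_right (mul_le_mul_of_nonneg_right ?_ hM0) _
        exact mul_le_mul_of_nonneg_left hB hCH.le
    _ = (C_H * (2 * (D + 1) + 4) + C_H * Real.exp 1 * M) * X * E := by ring
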